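/- Let W ≤ GL(V) be a nontrivial irreducible complex reflection group of rank n with Coxeter number h. Then for every 0 ≤ k ≤ n, the generalized Coxeter number of the character χ_k of the k-th exterior power Λ^kV equals hk; explicitly, |R|·binom(n,k) − Σ_{τ∈R} Tr(Λ^k τ) = h·k·binom(n,k), where Λ^kτ denotes the induced endomorphism of Λ^kV. -/

import Mathlib

open scoped BigOperators

noncomputable section

namespace CD

variable {V : Type*} [AddCommGroup V] [Module ℂ V]

/-- A unitary reflection: an invertible linear map whose fixed space is a hyperplane. -/
def IsReflection (τ : (V →ₗ[ℂ] V)ˣ) : Prop :=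
  Module.finrank ℂ V =
    Module.finrank ℂ (LinearMap.ker ((τ : V →ₗ[ℂ] V) - LinearMap.id)) + 1

/-- The set of reflections of a subgroup `W ≤ GL(V)`. -/
def reflections (W : Subgroup (V →ₗ[ℂ] V)ˣ) : Set ((V →ₗ[ℂ] V)ˣ) :=
  {τ | τ ∈ W ∧ IsReflection τ}

/-- The set of reflecting hyperplanes of `W`. -/
def hyperplanes (W : Subgroup (V →ₗ[ℂ] V)ˣ) : Set (Submodule ℂ V) :=
  (fun τ : (V →ₗ[ℂ] V)ˣ => LinearMap.ker ((τ : V →ₗ[ℂ] V) - LinearMap.id)) '' reflections W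

/-- `W` is a complex reflection group: a finite subgroup of `GL(V)` generated by
its reflections. -/
def IsReflectionGroup (W : Subgroup (V →ₗ[ℂ] V)ˣ) : Prop :=
  (W : Set ((V →ₗ[ℂ] V)ˣ)).Finite ∧ Subgroup.closure (reflections W) = W

/-- `W` is irreducible: the only `W`-stable subspaces of `V` are `0` and `V`. -/
def IsIrreducible (W : Subgroup (V →ₗ[ℂ] V)ˣ) : Prop :=
  ∀ U : Submodule ℂ V, (∀ w ∈ W, ∀ v ∈ U, (w : V →ₗ[ℂ] V) v ∈ U) → U = ⊥ ∨ U = ⊤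

/-- A regular vector: one lying on no reflecting hyperplane. -/
def IsRegular (W : Subgroup (V →ₗ[ℂ] V)ˣ) (v : V) : Prop :=
  ∀ H ∈ hyperplanes W, v ∉ H

/-- A Coxeter element: an element of `W` with a regular eigenvector of
eigenvalue `exp(2πi/h)`. -/
def IsCoxeterElement (W : Subgroup (V →ₗ[ℂ] V)ˣ) (h : ℕ) (c : (V →ₗ[ℂ] V)ˣ) : Prop :=
  c ∈ W ∧ ∃ v : V, IsRegular W v ∧
    (c : V →ₗ[ℂ] V) v = Complex.exp (2 * Real.pi * Complex.I / (h : ℂ)) • v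

/-- A flat: an intersection of reflecting hyperplanes (with `V` itself the empty
intersection). -/
def IsFlat (W : Subgroup (V →ₗ[ℂ] V)ˣ) (X : Submodule ℂ V) : Prop :=
  ∃ S ⊆ hyperplanes W, X = sInf S

/-- The parabolic subgroup of `W` attached to a subspace `X`: the elements of `W`
fixing `X` pointwise. -/
def parabolic (W : Subgroup (V →ₗ[ℂ] V)ˣ) (X : Submodule ℂ V) :
    Subgroup (V →ₗ[ℂ] V)ˣ where
  carrier := {w | w ∈ W ∧ ∀ x ∈ X, (w : V →ₗ[ℂ] V) x = x}
  one_mem' := ⟨W.one_mem, fun _ _ => rfl⟩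
  mul_mem' := by
    rintro a b ⟨ha, ha'⟩ ⟨hb, hb'⟩
    refine ⟨W.mul_mem ha hb, fun x hx => ?_⟩
    have : ((a * b : (V →ₗ[ℂ] V)ˣ) : V →ₗ[ℂ] V) x
        = (a : V →ₗ[ℂ] V) ((b : V →ₗ[ℂ] V) x) := rfl
    rw [this, hb' x hx, ha' x hx]
  inv_mem' := by
    rintro a ⟨ha, ha'⟩
    refine ⟨W.inv_mem ha, fun x hx => ?_⟩
    conv_lhs => rw [← ha' x hx]
    have : ((a⁻¹ : (V →ₗ[ℂ] V)ˣ) : V →ₗ[ℂ] V) ((a : V →ₗ[ℂ] V) x)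
        = (((a⁻¹ * a : (V →ₗ[ℂ] V)ˣ) : V →ₗ[ℂ] V)) x := rfl
    rw [this, inv_mul_cancel]
    rfl

/-- A parabolic tower: a chain `{1} = W₀ ≤ W₁ ≤ ⋯ ≤ Wₙ = W` of parabolic subgroups
attached to a decreasing chain of flats `Xᵢ` with `codim Xᵢ = i`. -/
def IsParabolicTower (W : Subgroup (V →ₗ[ℂ] V)ˣ) (n : ℕ)
    (Wt : ℕ → Subgroup (V →ₗ[ℂ] V)ˣ) : Prop :=
  ∃ Xs : ℕ → Submodule ℂ V,
    (∀ i ≤ n, IsFlat W (Xs i)) ∧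
    (∀ i ≤ n, Module.finrank ℂ V = Module.finrank ℂ (Xs i) + i) ∧
    (∀ i, i < n → Xs (i + 1) ≤ Xs i) ∧
    (∀ i ≤ n, Wt i = parabolic W (Xs i)) ∧
    (∀ i, i < n → Wt i ≤ Wt (i + 1)) ∧
    Wt 0 = ⊥ ∧ Wt n = W

/-- The weighted Laplacian attached to a set of reflections and a weight function. -/
def lap (Rs : Set ((V →ₗ[ℂ] V)ˣ)) (wt : (V →ₗ[ℂ] V)ˣ → ℂ) : V →ₗ[ℂ] V :=
  ∑ᶠ τ ∈ Rs, wt τ • ((LinearMap.id : V →ₗ[ℂ] V) - (τ : V →ₗ[ℂ] V))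

/-- The exterior algebra morphism induced by `f` preserves the `k`-th exterior power. -/
theorem map_mem_exteriorPower {k : ℕ} (f : V →ₗ[ℂ] V) :
    ∀ x ∈ ⋀[ℂ]^k V, (ExteriorAlgebra.map f).toLinearMap x ∈ ⋀[ℂ]^k V := by
  have mono : ∀ (M N : Submodule ℂ (ExteriorAlgebra ℂ V)), M ≤ N → M ^ k ≤ N ^ k := by
    intro M N h
    induction k with
    | zero => simp
    | succ k ih => rw [pow_succ, pow_succ]; exact mul_le_mul' ih h
  intro x hx
  have key : Submodule.map (ExteriorAlgebra.map f).toLinearMap (⋀[ℂ]^k V) ≤ ⋀[ℂ]^k V := by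
    rw [show (⋀[ℂ]^k V) = LinearMap.range (ExteriorAlgebra.ι ℂ : V →ₗ[ℂ] _) ^ k from rfl,
      Submodule.map_pow]
    refine le_trans (mono _ _ ?_) le_rfl
    rw [ExteriorAlgebra.ι_range_map_map]
    exact LinearMap.map_le_range
  exact key ⟨x, hx, rfl⟩

/-- The endomorphism of the `k`-th exterior power `⋀ᵏV` induced by an endomorphism
of `V`. -/
def extMap (k : ℕ) (f : V →ₗ[ℂ] V) : (⋀[ℂ]^k V) →ₗ[ℂ] (⋀[ℂ]^k V) :=
  (ExteriorAlgebra.map f).toLinearMap.restrict (map_mem_exteriorPower f)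


open ExteriorAlgebra

variable {n k : ℕ} (b : Module.Basis (Fin n) ℂ V)

/-- index type for the basis of the k-th exterior power -/
abbrev KS (n k : ℕ) := {s : Finset (Fin n) // s.card = k}

def idxOf (s : KS n k) : Fin k → Fin n := fun i => (s.1.orderIsoOfFin s.2 i : Fin n)

lemma idxOf_mem (s : KS n k) (i : Fin k) : idxOf s i ∈ s.1 := (s.1.orderIsoOfFin s.2 i).2

lemma idxOf_injective (s : KS n k) : Function.Injective (idxOf s) := by
  intro i j hij
  exact (s.1.orderIsoOfFin s.2).injective (Subtype.ext hij)

def Bv (s : KS n k) : ExteriorAlgebra ℂ V := ιMulti ℂ k fun i => b (idxOf s i)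

lemma Bv_mem (s : KS n k) : Bv b s ∈ ⋀[ℂ]^k V :=
  ExteriorAlgebra.ιMulti_range ℂ k ⟨_, rfl⟩

/-- the "minor" coordinate alternating form attached to `s` -/
def coordA (s : KS n k) : V [⋀^Fin k]→ₗ[ℂ] ℂ :=
  (Matrix.detRowAlternating).compLinearMap
    (LinearMap.pi fun j => b.coord (idxOf s j))

lemma coordA_apply (s : KS n k) (v : Fin k → V) :
    coordA b s v = Matrix.det (Matrix.of fun i j => b.repr (v i) (idxOf s j)) := rfl

/-- coordinate functional on the exterior algebra -/
def Fc (s : KS n k) : ExteriorAlgebra ℂ V →ₗ[ℂ] ℂ :=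
  ExteriorAlgebra.liftAlternating
    (Function.update (fun i => (0 : V [⋀^Fin i]→ₗ[ℂ] ℂ)) k (coordA b s))

lemma Fc_ιMulti (s : KS n k) (v : Fin k → V) :
    Fc b s (ιMulti ℂ k v) = coordA b s v := by
  rw [Fc, ExteriorAlgebra.liftAlternating_apply_ιMulti, Function.update_self]

lemma Fc_Bv (s t : KS n k) : Fc b s (Bv b t) = if t = s then 1 else 0 := by
  classical
  rw [Bv, Fc_ιMulti, coordA_apply]
  split_ifs with hts
  · subst hts
    have : (Matrix.of fun i j => b.repr (b (idxOf t i)) (idxOf t j)) = 1 := by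
      ext i j
      rw [Matrix.of_apply, Module.Basis.repr_self, Matrix.one_apply]
      by_cases hij : i = j
      · subst hij; simp
      · rw [if_neg hij, Finsupp.single_apply, if_neg]
        exact fun hc => hij (idxOf_injective t hc)
    rw [this, Matrix.det_one]
  · -- there is an element of s not in t
    have hst : ¬ s.1 ⊆ t.1 := by
      intro hsub
      exact hts (Subtype.ext (Finset.eq_of_subset_of_card_le hsub
        (by rw [s.2, t.2])).symm)
    obtain ⟨x, hxs, hxt⟩ := Finset.not_subset.mp hst
    set j : Fin k := (s.1.orderIsoOfFin s.2).symm ⟨x, hxs⟩ with hj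
    apply Matrix.det_eq_zero_of_column_eq_zero j
    intro i
    have hsj : idxOf s j = x := by
      rw [idxOf, hj, OrderIso.apply_symm_apply]
    rw [Matrix.of_apply, hsj, Module.Basis.repr_self, Finsupp.single_apply, if_neg]
    intro hc
    exact hxt (hc ▸ idxOf_mem t i)


def BvS (s : KS n k) : (⋀[ℂ]^k V) := ⟨Bv b s, Bv_mem b s⟩

lemma BvS_li : LinearIndependent ℂ (BvS b (n := n) (k := k)) := by
  classical
  rw [linearIndependent_iff']
  intro t g hsum s hs
  have h0 : (∑ i ∈ t, g i • Bv b i) = 0 := by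
    have := congrArg (Subtype.val) hsum
    simpa [BvS] using this
  have := congrArg (Fc b s) h0
  rw [map_sum, map_zero] at this
  simp only [map_smul, Fc_Bv, smul_eq_mul] at this
  rwa [Finset.sum_eq_single s (fun i _ hi => by rw [if_neg hi, mul_zero])
    (fun hns => absurd hs hns), if_pos rfl, mul_one] at this

lemma ιMulti_inj_mem_span (t : Fin k → Fin n) (ht : Function.Injective t) :
    ιMulti ℂ k (fun i => b (t i)) ∈ Submodule.span ℂ (Set.range (Bv b (n := n) (k := k))) := by
  classical
  set s : KS n k := ⟨Finset.univ.image t, by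
    rw [Finset.card_image_of_injective _ ht, Finset.card_univ, Fintype.card_fin]⟩ with hs
  have htmem : ∀ i, t i ∈ s.1 := fun i => Finset.mem_image_of_mem t (Finset.mem_univ i)
  have hbij : Function.Bijective (fun i => (⟨t i, htmem i⟩ : {x // x ∈ s.1})) := by
    rw [Fintype.bijective_iff_injective_and_card]
    constructor
    · intro i j hij
      exact ht (congrArg Subtype.val hij)
    · rw [Fintype.card_coe, s.2, Fintype.card_fin]
  set σ : Equiv.Perm (Fin k) :=
    (Equiv.ofBijective _ hbij).trans (s.1.orderIsoOfFin s.2).toEquiv.symm with hσ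
  have hcomp : (fun i => b (t i)) = (fun i => b (idxOf s i)) ∘ σ := by
    funext i
    have : idxOf s (σ i) = t i := by
      show ((s.1.orderIsoOfFin s.2) ((s.1.orderIsoOfFin s.2).symm _) : Fin n) = t i
      rw [OrderIso.apply_symm_apply]
      rfl
    simp [Function.comp, this]
  rw [hcomp, AlternatingMap.map_perm]
  exact Submodule.smul_mem _ _ (Submodule.subset_span ⟨s, rfl⟩)

lemma Bv_span_aux (v : Fin k → V) :
    ιMulti ℂ k v ∈ Submodule.span ℂ (Set.range (Bv b (n := n) (k := k))) := by
  classical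
  have hv : ∀ i, v i = ∑ j : Fin n, (b.repr (v i)) j • b j := fun i => (b.sum_repr (v i)).symm
  have hexp : ιMulti ℂ k v
      = ∑ m : Fin k → Fin n, (∏ i, (b.repr (v i)) (m i)) • ιMulti ℂ k (fun i => b (m i)) := by
    calc ιMulti ℂ k v = ιMulti ℂ k (fun i => ∑ j : Fin n, (b.repr (v i)) j • b j) := by
          congr 1; funext i; exact hv i
    _ = ∑ m : Fin k → Fin n, ιMulti ℂ k (fun i => (b.repr (v i)) (m i) • b (m i)) :=
          (ιMulti ℂ k).toMultilinearMap.map_sum (fun i j => (b.repr (v i)) j • b j)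
    _ = ∑ m : Fin k → Fin n, (∏ i, (b.repr (v i)) (m i)) • ιMulti ℂ k (fun i => b (m i)) := by
          refine Finset.sum_congr rfl fun m _ => ?_
          exact (ιMulti ℂ k).toMultilinearMap.map_smul_univ _ _
  rw [hexp]
  refine Submodule.sum_mem _ fun m _ => Submodule.smul_mem _ _ ?_
  by_cases hm : Function.Injective m
  · exact ιMulti_inj_mem_span b m hm
  · rw [Function.not_injective_iff] at hm
    obtain ⟨i, j, hij, hne⟩ := hm
    rw [AlternatingMap.map_eq_zero_of_eq _ _ (by rw [hij]) hne]
    exact Submodule.zero_mem _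

lemma BvS_span : ⊤ ≤ Submodule.span ℂ (Set.range (BvS b (n := n) (k := k))) := by
  rintro ⟨x, hx⟩ -
  have hx' : x ∈ Submodule.span ℂ (Set.range (Bv b (n := n) (k := k))) := by
    rw [← ExteriorAlgebra.ιMulti_span_fixedDegree] at hx
    refine Submodule.span_le.mpr ?_ hx
    rintro y ⟨v, rfl⟩
    exact Bv_span_aux b v
  have hmap : Submodule.span ℂ (Set.range (Bv b (n := n) (k := k)))
      = Submodule.map (⋀[ℂ]^k V).subtype
        (Submodule.span ℂ (Set.range (BvS b (n := n) (k := k)))) := by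
    rw [Submodule.map_span]
    congr 1
    ext y
    constructor
    · rintro ⟨s, rfl⟩; exact ⟨BvS b s, ⟨s, rfl⟩, rfl⟩
    · rintro ⟨z, ⟨s, rfl⟩, rfl⟩; exact ⟨s, rfl⟩
  rw [hmap] at hx'
  obtain ⟨z, hz, hzx⟩ := hx'
  have : z = ⟨x, hx⟩ := Subtype.ext hzx
  rwa [this] at hz

def extBasis : Module.Basis (KS n k) ℂ (⋀[ℂ]^k V) := Module.Basis.mk (BvS_li b) (BvS_span b)


lemma extBasis_repr_eq (x : ⋀[ℂ]^k V) (s : KS n k) :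
    (extBasis b).repr x s = Fc b s x.1 := by
  classical
  have hmaps : (Finsupp.lapply s).comp ((extBasis b (n := n) (k := k)).repr.toLinearMap)
      = (Fc b s).comp (⋀[ℂ]^k V).subtype := by
    apply Module.Basis.ext (extBasis b)
    intro t
    show Finsupp.lapply (M := ℂ) (R := ℂ) s ((extBasis b).repr (extBasis b t))
        = Fc b s ((extBasis b t : ⋀[ℂ]^k V) : ExteriorAlgebra ℂ V)
    rw [Module.Basis.repr_self, Finsupp.lapply_apply, Finsupp.single_apply,
      show ((extBasis b t : ⋀[ℂ]^k V) : ExteriorAlgebra ℂ V) = Bv b t by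
        rw [extBasis, Module.Basis.coe_mk]; rfl, Fc_Bv]
  exact congrFun (congrArg (fun g => DFunLike.coe g) hmaps) x

lemma trace_extMap_eq_sum (f : V →ₗ[ℂ] V) :
    LinearMap.trace ℂ (⋀[ℂ]^k V) (extMap k f)
      = ∑ s : KS n k, Fc b s (ExteriorAlgebra.map f (Bv b s)) := by
  classical
  rw [LinearMap.trace_eq_matrix_trace ℂ (extBasis b) (extMap k f), Matrix.trace]
  refine Finset.sum_congr rfl fun s _ => ?_
  rw [Matrix.diag_apply, LinearMap.toMatrix_apply, extBasis_repr_eq]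
  congr 1
  rw [show extBasis b s = BvS b s by rw [extBasis, Module.Basis.mk_apply]]
  rfl

lemma Fc_map_of_fix (f : V →ₗ[ℂ] V) (i₀ : Fin n) (hf : ∀ j, j ≠ i₀ → f (b j) = b j)
    (s : KS n k) :
    Fc b s (ExteriorAlgebra.map f (Bv b s))
      = if i₀ ∈ s.1 then b.repr (f (b i₀)) i₀ else 1 := by
  classical
  rw [Bv, ExteriorAlgebra.map_apply_ιMulti]
  by_cases hi : i₀ ∈ s.1
  · rw [if_pos hi]
    set p : Fin k := (s.1.orderIsoOfFin s.2).symm ⟨i₀, hi⟩ with hp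
    have hidxp : idxOf s p = i₀ := by
      rw [idxOf, hp, OrderIso.apply_symm_apply]
    have hcomp : (f ∘ fun i => b (idxOf s i))
        = Function.update (fun i => b (idxOf s i)) p (f (b i₀)) := by
      funext i
      by_cases hip : i = p
      · subst hip
        rw [Function.update_self, Function.comp_apply, hidxp]
      · rw [Function.update_of_ne hip, Function.comp_apply]
        refine hf _ fun hc => hip ?_
        exact idxOf_injective s (hc.trans hidxp.symm)
    have key : ∀ j : Fin n, j ≠ i₀ →
        Fc b s (ιMulti ℂ k (Function.update (fun i => b (idxOf s i)) p (b j))) = 0 := by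
      intro j hj
      rw [Fc_ιMulti, coordA_apply]
      apply Matrix.det_eq_zero_of_column_eq_zero p
      intro i
      rw [Matrix.of_apply, hidxp]
      by_cases hip : i = p
      · subst hip
        rw [Function.update_self, Module.Basis.repr_self, Finsupp.single_apply, if_neg hj]
      · rw [Function.update_of_ne hip, Module.Basis.repr_self, Finsupp.single_apply, if_neg]
        intro hc
        exact hip (idxOf_injective s (hc.trans hidxp.symm))
    have hexpand : ιMulti ℂ k (Function.update (fun i => b (idxOf s i)) p (f (b i₀)))
        = ∑ j : Fin n, b.repr (f (b i₀)) j •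
            ιMulti ℂ k (Function.update (fun i => b (idxOf s i)) p (b j)) := by
      conv_lhs => rw [show f (b i₀) = ∑ j : Fin n, b.repr (f (b i₀)) j • b j from
        (b.sum_repr _).symm]
      rw [show (ιMulti ℂ k : V [⋀^Fin k]→ₗ[ℂ] ExteriorAlgebra ℂ V)
            (Function.update (fun i => b (idxOf s i)) p (∑ j : Fin n, b.repr (f (b i₀)) j • b j))
          = (ιMulti ℂ k).toMultilinearMap
            (Function.update (fun i => b (idxOf s i)) p (∑ j : Fin n, b.repr (f (b i₀)) j • b j))
          from rfl]
      rw [MultilinearMap.map_update_sum]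
      refine Finset.sum_congr rfl fun j _ => ?_
      exact (ιMulti ℂ k).toMultilinearMap.map_update_smul _ p _ _
    rw [hcomp, hexpand, map_sum]
    simp only [map_smul, smul_eq_mul]
    rw [Finset.sum_eq_single i₀ (fun j _ hj => by rw [key j hj, mul_zero])
      (fun hni => absurd (Finset.mem_univ i₀) hni)]
    have hself : Function.update (fun i => b (idxOf s i)) p (b i₀)
        = fun i => b (idxOf s i) := by
      rw [show b i₀ = b (idxOf s p) by rw [hidxp]]
      exact Function.update_eq_self _ _
    rw [hself, show (ιMulti ℂ k fun i => b (idxOf s i)) = Bv b s from rfl, Fc_Bv,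
      if_pos rfl, mul_one]
  · rw [if_neg hi]
    have hcomp : (f ∘ fun i => b (idxOf s i)) = fun i => b (idxOf s i) := by
      funext i
      refine hf _ fun hc => hi ?_
      rw [← hc]; exact idxOf_mem s i
    rw [hcomp, show (ιMulti ℂ k fun i => b (idxOf s i)) = Bv b s from rfl, Fc_Bv, if_pos rfl]


lemma trace_extMap_fix (f : V →ₗ[ℂ] V) (i₀ : Fin n) (hf : ∀ j, j ≠ i₀ → f (b j) = b j)
    (hk : 1 ≤ k) :
    LinearMap.trace ℂ (⋀[ℂ]^k V) (extMap k f)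
      = ((n-1).choose k : ℂ) + b.repr (f (b i₀)) i₀ * ((n-1).choose (k-1) : ℂ) := by
  classical
  rw [trace_extMap_eq_sum b f]
  set a := b.repr (f (b i₀)) i₀ with ha
  have h1 : ∑ s : KS n k, Fc b s (ExteriorAlgebra.map f (Bv b s))
      = ∑ s : KS n k, (if i₀ ∈ s.1 then a else 1) :=
    Finset.sum_congr rfl fun s _ => Fc_map_of_fix b f i₀ hf s
  rw [h1]
  have h2 : ∑ s : KS n k, (if i₀ ∈ s.1 then a else 1)
      = ∑ s ∈ Finset.powersetCard k (Finset.univ : Finset (Fin n)),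
          (if i₀ ∈ s then a else 1) := by
    rw [Finset.sum_subtype (Finset.powersetCard k (Finset.univ : Finset (Fin n)))
      (fun x => Finset.mem_powersetCard_univ) (fun s => if i₀ ∈ s then a else (1:ℂ))]
  rw [h2, ← Finset.sum_filter_add_sum_filter_not
    (Finset.powersetCard k (Finset.univ : Finset (Fin n))) (fun s => i₀ ∈ s)]
  have hc2 : (Finset.powersetCard k (Finset.univ : Finset (Fin n))).filter
      (fun s => ¬ i₀ ∈ s) = Finset.powersetCard k (Finset.univ.erase i₀) := by
    ext t
    simp only [Finset.mem_filter, Finset.mem_powersetCard, Finset.subset_erase]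
    constructor
    · rintro ⟨⟨hsub, hcard⟩, hni⟩; exact ⟨⟨hsub, hni⟩, hcard⟩
    · rintro ⟨⟨hsub, hni⟩, hcard⟩; exact ⟨⟨hsub, hcard⟩, hni⟩
  have herase : (Finset.univ.erase i₀ : Finset (Fin n)).card = n - 1 := by
    rw [Finset.card_erase_of_mem (Finset.mem_univ i₀), Finset.card_univ, Fintype.card_fin]
  have hc1 : ((Finset.powersetCard k (Finset.univ : Finset (Fin n))).filter
      (fun s => i₀ ∈ s)).card = (n-1).choose (k-1) := by
    rw [← herase, ← Finset.card_powersetCard]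
    apply Finset.card_bij' (fun s _ => s.erase i₀) (fun t _ => insert i₀ t)
    · intro s hs
      rw [Finset.mem_filter] at hs
      exact Finset.insert_erase hs.2
    · intro t ht
      rw [Finset.mem_powersetCard, Finset.subset_erase] at ht
      exact Finset.erase_insert ht.1.2
    · intro s hs
      rw [Finset.mem_filter, Finset.mem_powersetCard] at hs
      rw [Finset.mem_powersetCard]
      exact ⟨Finset.erase_subset_erase i₀ hs.1.1,
        by rw [Finset.card_erase_of_mem hs.2, hs.1.2]⟩
    · intro t ht
      rw [Finset.mem_powersetCard, Finset.subset_erase] at ht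
      rw [Finset.mem_filter, Finset.mem_powersetCard]
      refine ⟨⟨Finset.subset_univ _, ?_⟩, Finset.mem_insert_self _ _⟩
      rw [Finset.card_insert_of_notMem ht.1.2, ht.2]
      exact Nat.succ_pred_eq_of_pos hk
  have e1 : ∑ s ∈ (Finset.powersetCard k (Finset.univ : Finset (Fin n))).filter
      (fun s => i₀ ∈ s), (if i₀ ∈ s then a else 1) = ((n-1).choose (k-1) : ℂ) * a := by
    rw [Finset.sum_congr rfl (fun s hs => if_pos (Finset.mem_filter.mp hs).2),
      Finset.sum_const, hc1, nsmul_eq_mul]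
  have e2 : ∑ s ∈ (Finset.powersetCard k (Finset.univ : Finset (Fin n))).filter
      (fun s => ¬ i₀ ∈ s), (if i₀ ∈ s then a else 1) = ((n-1).choose k : ℂ) := by
    rw [Finset.sum_congr rfl (fun s hs => if_neg (Finset.mem_filter.mp hs).2),
      Finset.sum_const, hc2, Finset.card_powersetCard, herase, nsmul_eq_mul, mul_one]
  rw [e1, e2]
  ring




/-! ### Part 2: group-theoretic lemmas -/

lemma exists_pow_eq_one (W : Subgroup (V →ₗ[ℂ] V)ˣ)
    (hfin : (W : Set ((V →ₗ[ℂ] V)ˣ)).Finite) {g : (V →ₗ[ℂ] V)ˣ} (hg : g ∈ W) :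
    ∃ m : ℕ, 0 < m ∧ g ^ m = 1 := by
  haveI : Finite W := hfin.to_subtype
  refine ⟨orderOf (⟨g, hg⟩ : W), orderOf_pos _, ?_⟩
  have h1 := pow_orderOf_eq_one (⟨g, hg⟩ : W)
  have h2 := congrArg (Subtype.val) h1
  simpa using h2

lemma exists_adapted_basis [FiniteDimensional ℂ V] {n : ℕ} (hn : Module.finrank ℂ V = n)
    (hn1 : 1 ≤ n) (H : Submodule ℂ V) (hH : Module.finrank ℂ H = n - 1) :
    ∃ (b : Module.Basis (Fin n) ℂ V) (i₀ : Fin n), ∀ j, j ≠ i₀ → (b j : V) ∈ H := by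
  obtain ⟨L, hL⟩ := Submodule.exists_isCompl H
  have hLrank : Module.finrank ℂ L = 1 := by
    have hadd := Submodule.finrank_add_eq_of_isCompl hL
    rw [hH, hn] at hadd
    omega
  let bH := Module.finBasisOfFinrankEq ℂ H hH
  let bL := Module.finBasisOfFinrankEq ℂ L hLrank
  let e : (Fin (n-1) ⊕ Fin 1) ≃ Fin n := finSumFinEquiv.trans (finCongr (by omega))
  refine ⟨((bH.prod bL).map (Submodule.prodEquivOfIsCompl H L hL)).reindex e,
    e (Sum.inr 0), fun j hj => ?_⟩
  rw [Module.Basis.reindex_apply, Module.Basis.map_apply]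
  rcases hsj : e.symm j with i | i
  · rw [Module.Basis.prod_apply, Sum.elim_inl, Function.comp_apply, LinearMap.inl_apply,
      Submodule.coe_prodEquivOfIsCompl']
    simp only [ZeroMemClass.coe_zero, add_zero]
    exact (bH i).2
  · exfalso
    apply hj
    have h0 : i = 0 := Subsingleton.elim _ _
    rw [h0] at hsj
    rw [← hsj, Equiv.apply_symm_apply]

lemma fix_zeta_one_eq_one {n : ℕ} (b : Module.Basis (Fin n) ℂ V) (i₀ : Fin n)
    (H : Submodule ℂ V) (hbH : ∀ j, j ≠ i₀ → (b j : V) ∈ H)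
    (g : (V →ₗ[ℂ] V)ˣ) (hfix : ∀ x ∈ H, (g : V →ₗ[ℂ] V) x = x)
    (hζ : b.repr ((g : V →ₗ[ℂ] V) (b i₀)) i₀ = 1)
    (m : ℕ) (hm : 0 < m) (hgm : g ^ m = 1) : g = 1 := by
  classical
  set c := b.repr ((g : V →ₗ[ℂ] V) (b i₀)) with hc
  set w : V := ∑ j ∈ Finset.univ.erase i₀, c j • b j with hw
  have hwH : w ∈ H := Submodule.sum_mem _ fun j hj =>
    Submodule.smul_mem _ _ (hbH j (Finset.mem_erase.mp hj).1)
  have hgb : (g : V →ₗ[ℂ] V) (b i₀) = b i₀ + w := by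
    conv_lhs => rw [← b.sum_repr ((g : V →ₗ[ℂ] V) (b i₀))]
    rw [← Finset.add_sum_erase _ _ (Finset.mem_univ i₀), ← hc, hζ, one_smul, ← hw]
  have hpow : ∀ p : ℕ, ((g ^ p : (V →ₗ[ℂ] V)ˣ) : V →ₗ[ℂ] V) (b i₀) = b i₀ + (p : ℂ) • w := by
    intro p
    induction p with
    | zero => simp
    | succ p ih =>
      have hstep : ((g ^ (p+1) : (V →ₗ[ℂ] V)ˣ) : V →ₗ[ℂ] V) (b i₀)
          = (g : V →ₗ[ℂ] V) (((g ^ p : (V →ₗ[ℂ] V)ˣ) : V →ₗ[ℂ] V) (b i₀)) := by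
        rw [pow_succ']
        rfl
      rw [hstep, ih, map_add, hgb, map_smul, hfix w hwH]
      push_cast
      module
  have hm' := hpow m
  rw [hgm] at hm'
  have hmw : (m : ℂ) • w = 0 := by
    have h2 : b i₀ = b i₀ + (m : ℂ) • w := by simpa using hm'
    exact (left_eq_add.mp h2)
  have hw0 : w = 0 := by
    rcases smul_eq_zero.mp hmw with hm0 | h
    · exact absurd hm0 (by exact_mod_cast hm.ne')
    · exact h
  apply Units.ext
  apply b.ext
  intro j
  by_cases hj : j = i₀
  · subst hj
    rw [hgb, hw0, add_zero]
    rfl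
  · rw [hfix _ (hbH j hj)]
    rfl

lemma perH {n kk : ℕ} [FiniteDimensional ℂ V] (hn : Module.finrank ℂ V = n)
    (W : Subgroup (V →ₗ[ℂ] V)ˣ) (hWfin : (W : Set ((V →ₗ[ℂ] V)ˣ)).Finite)
    (H : Submodule ℂ V) (τ₀ : (V →ₗ[ℂ] V)ˣ) (hτ₀W : τ₀ ∈ W) (hτ₀r : IsReflection τ₀)
    (hτ₀H : LinearMap.ker ((τ₀ : V →ₗ[ℂ] V) - LinearMap.id) = H)
    (F : Finset ((V →ₗ[ℂ] V)ˣ))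
    (hF : ∀ τ, τ ∈ F ↔ (τ ∈ W ∧ IsReflection τ) ∧
      LinearMap.ker ((τ : V →ₗ[ℂ] V) - LinearMap.id) = H)
    (hkk : 1 ≤ kk) :
    ∑ τ ∈ F, LinearMap.trace ℂ (⋀[ℂ]^kk V) (extMap kk (τ : V →ₗ[ℂ] V))
      = (F.card : ℂ) * ((n-1).choose kk : ℂ) - ((n-1).choose (kk-1) : ℂ) := by
  classical
  -- basic facts about fixing H pointwise
  have hfix_of_ker : ∀ (g : (V →ₗ[ℂ] V)ˣ),
      LinearMap.ker ((g : V →ₗ[ℂ] V) - LinearMap.id) = H →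
      ∀ x ∈ H, (g : V →ₗ[ℂ] V) x = x := by
    intro g hg x hx
    rw [← hg] at hx
    have := LinearMap.mem_ker.mp hx
    rw [LinearMap.sub_apply, LinearMap.id_apply, sub_eq_zero] at this
    exact this
  have hHrank : Module.finrank ℂ H = n - 1 := by
    have := hτ₀r
    rw [IsReflection, hτ₀H, hn] at this
    omega
  have hn1 : 1 ≤ n := by
    have := hτ₀r
    rw [IsReflection, hτ₀H, hn] at this
    omega
  obtain ⟨b, i₀, hbH⟩ := exists_adapted_basis hn hn1 H hHrank
  -- the fixing subgroup as a finset
  have hGsub : {g : (V →ₗ[ℂ] V)ˣ | g ∈ W ∧ ∀ x ∈ H, (g : V →ₗ[ℂ] V) x = x}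
      ⊆ (W : Set ((V →ₗ[ℂ] V)ˣ)) := fun g hg => hg.1
  have hGfin : {g : (V →ₗ[ℂ] V)ˣ | g ∈ W ∧ ∀ x ∈ H, (g : V →ₗ[ℂ] V) x = x}.Finite :=
    hWfin.subset hGsub
  set G := hGfin.toFinset with hG
  have hmemG : ∀ g, g ∈ G ↔ g ∈ W ∧ ∀ x ∈ H, (g : V →ₗ[ℂ] V) x = x := by
    intro g
    rw [hG, Set.Finite.mem_toFinset]
    rfl
  set ζ : (V →ₗ[ℂ] V)ˣ → ℂ := fun g => b.repr ((g : V →ₗ[ℂ] V) (b i₀)) i₀ with hζ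
  -- ζ is multiplicative-ish
  have hζcoord : ∀ g : (V →ₗ[ℂ] V)ˣ, (∀ x ∈ H, (g : V →ₗ[ℂ] V) x = x) →
      ∀ x : V, b.repr ((g : V →ₗ[ℂ] V) x) i₀ = ζ g * b.repr x i₀ := by
    intro g hgfix
    have heq : (Finsupp.lapply (M := ℂ) (R := ℂ) i₀).comp
          (b.repr.toLinearMap.comp (g : V →ₗ[ℂ] V))
        = ζ g • ((Finsupp.lapply (M := ℂ) (R := ℂ) i₀).comp b.repr.toLinearMap) := by
      apply b.ext
      intro j
      by_cases hj : j = i₀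
      · subst hj
        simp only [LinearMap.comp_apply, LinearMap.smul_apply, Finsupp.lapply_apply,
          LinearEquiv.coe_toLinearMap, Module.Basis.repr_self, smul_eq_mul]
        rw [Finsupp.single_apply, if_pos rfl, mul_one]
      · simp only [LinearMap.comp_apply, LinearMap.smul_apply, Finsupp.lapply_apply,
          LinearEquiv.coe_toLinearMap, smul_eq_mul]
        rw [hgfix _ (hbH j hj), Module.Basis.repr_self, Finsupp.single_apply, if_neg hj, mul_zero]
    intro x
    have := congrFun (congrArg (fun g => DFunLike.coe g) heq) x
    simpa using this
  have hζmul : ∀ g g' : (V →ₗ[ℂ] V)ˣ, (∀ x ∈ H, (g : V →ₗ[ℂ] V) x = x) →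
      ζ (g * g') = ζ g * ζ g' := by
    intro g g' hgfix
    have h1 : ((g * g' : (V →ₗ[ℂ] V)ˣ) : V →ₗ[ℂ] V) (b i₀)
        = (g : V →ₗ[ℂ] V) ((g' : V →ₗ[ℂ] V) (b i₀)) := rfl
    rw [hζ]
    simp only
    rw [h1, hζcoord g hgfix]
  have hζ1 : ζ 1 = 1 := by
    rw [hζ]
    simp only [Units.val_one, Module.End.one_apply, Module.Basis.repr_self]
    rw [Finsupp.single_apply, if_pos rfl]
  -- the fiber F equals G minus the identity
  have hτ0ne : ∀ τ : (V →ₗ[ℂ] V)ˣ, IsReflection τ → τ ≠ 1 := by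
    intro τ hτ he
    subst he
    rw [IsReflection] at hτ
    have h1 : ((1 : (V →ₗ[ℂ] V)ˣ) : V →ₗ[ℂ] V) - LinearMap.id = 0 := by
      rw [Units.val_one, Module.End.one_eq_id, sub_self]
    rw [h1, LinearMap.ker_zero, finrank_top] at hτ
    omega
  have hFG : F = G.erase 1 := by
    ext τ
    rw [hF, Finset.mem_erase, hmemG]
    constructor
    · rintro ⟨⟨hτW, hτr⟩, hτH⟩
      exact ⟨hτ0ne τ hτr, hτW, hfix_of_ker τ hτH⟩
    · rintro ⟨hτ1, hτW, hτfix⟩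
      have hHle : H ≤ LinearMap.ker ((τ : V →ₗ[ℂ] V) - LinearMap.id) := by
        intro x hx
        rw [LinearMap.mem_ker, LinearMap.sub_apply, LinearMap.id_apply, sub_eq_zero]
        exact hτfix x hx
      have hker_ne : LinearMap.ker ((τ : V →ₗ[ℂ] V) - LinearMap.id) ≠ ⊤ := by
        intro hk
        apply hτ1
        apply Units.ext
        apply LinearMap.ext
        intro x
        have hx : x ∈ LinearMap.ker ((τ : V →ₗ[ℂ] V) - LinearMap.id) := by
          rw [hk]; trivial
        rw [LinearMap.mem_ker, LinearMap.sub_apply, LinearMap.id_apply, sub_eq_zero] at hx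
        exact hx
      have hlt : Module.finrank ℂ (LinearMap.ker ((τ : V →ₗ[ℂ] V) - LinearMap.id))
          < Module.finrank ℂ V :=
        Submodule.finrank_lt hker_ne
      have hkerH : H = LinearMap.ker ((τ : V →ₗ[ℂ] V) - LinearMap.id) := by
        apply Submodule.eq_of_le_of_finrank_le hHle
        rw [hHrank]
        omega
      refine ⟨⟨hτW, ?_⟩, hkerH.symm⟩
      rw [IsReflection, ← hkerH, hHrank, hn]
      omega
  -- identity and τ₀ in G
  have hG1 : (1 : (V →ₗ[ℂ] V)ˣ) ∈ G := by
    rw [hmemG]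
    exact ⟨W.one_mem, fun x _ => by rw [Units.val_one]; rfl⟩
  have hτ₀F : τ₀ ∈ F := (hF τ₀).mpr ⟨⟨hτ₀W, hτ₀r⟩, hτ₀H⟩
  have hτ₀G : τ₀ ∈ G := by
    rw [hFG] at hτ₀F
    exact Finset.mem_of_mem_erase hτ₀F
  have hτ₀fix : ∀ x ∈ H, (τ₀ : V →ₗ[ℂ] V) x = x := ((hmemG τ₀).mp hτ₀G).2
  have hζτ₀ : ζ τ₀ ≠ 1 := by
    intro hζe
    obtain ⟨m, hm, hgm⟩ := exists_pow_eq_one W hWfin hτ₀W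
    exact (hτ0ne τ₀ hτ₀r) (fix_zeta_one_eq_one b i₀ H hbH τ₀ hτ₀fix hζe m hm hgm)
  -- character sum over G is zero
  have hGstab : ∀ g ∈ G, τ₀ * g ∈ G := by
    intro g hg
    rw [hmemG] at hg ⊢
    refine ⟨W.mul_mem hτ₀W hg.1, fun x hx => ?_⟩
    have : ((τ₀ * g : (V →ₗ[ℂ] V)ˣ) : V →ₗ[ℂ] V) x
        = (τ₀ : V →ₗ[ℂ] V) ((g : V →ₗ[ℂ] V) x) := rfl
    rw [this, hg.2 x hx, hτ₀fix x hx]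
  have hGstab' : ∀ g ∈ G, τ₀⁻¹ * g ∈ G := by
    intro g hg
    rw [hmemG] at hg ⊢
    refine ⟨W.mul_mem (W.inv_mem hτ₀W) hg.1, fun x hx => ?_⟩
    have h2 : ((τ₀⁻¹ * g : (V →ₗ[ℂ] V)ˣ) : V →ₗ[ℂ] V) x
        = ((τ₀⁻¹ : (V →ₗ[ℂ] V)ˣ) : V →ₗ[ℂ] V) ((g : V →ₗ[ℂ] V) x) := rfl
    rw [h2, hg.2 x hx]
    conv_lhs => rw [← hτ₀fix x hx]
    have h3 : ((τ₀⁻¹ : (V →ₗ[ℂ] V)ˣ) : V →ₗ[ℂ] V) ((τ₀ : V →ₗ[ℂ] V) x)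
        = ((τ₀⁻¹ * τ₀ : (V →ₗ[ℂ] V)ˣ) : V →ₗ[ℂ] V) x := rfl
    rw [h3, inv_mul_cancel]
    rw [Units.val_one]
    rfl
  have hsumG : ∑ g ∈ G, ζ g = 0 := by
    have hswap : ∑ g ∈ G, ζ g = ∑ g ∈ G, ζ (τ₀ * g) := by
      refine Finset.sum_nbij' (fun g => τ₀⁻¹ * g) (fun g => τ₀ * g)
        hGstab' hGstab (fun g _ => by simp [← mul_assoc])
        (fun g _ => by simp [← mul_assoc])
        (fun g _ => by simp [← mul_assoc])
    have hswap2 : ∑ g ∈ G, ζ (τ₀ * g) = ζ τ₀ * ∑ g ∈ G, ζ g := by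
      rw [Finset.mul_sum]
      exact Finset.sum_congr rfl fun g _ => hζmul τ₀ g hτ₀fix
    have : (1 - ζ τ₀) * ∑ g ∈ G, ζ g = 0 := by
      rw [sub_mul, one_mul, ← hswap2, ← hswap, sub_self]
    rcases mul_eq_zero.mp this with h | h
    · exact absurd (by linear_combination -h : ζ τ₀ = 1) hζτ₀
    · exact h
  have hsumF : ∑ τ ∈ F, ζ τ = -1 := by
    rw [hFG, Finset.sum_erase_eq_sub hG1, hsumG, hζ1, zero_sub]
  -- trace of each reflection in the fiber
  have htrace : ∀ τ ∈ F, LinearMap.trace ℂ (⋀[ℂ]^kk V) (extMap kk (τ : V →ₗ[ℂ] V))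
      = ((n-1).choose kk : ℂ) + ζ τ * ((n-1).choose (kk-1) : ℂ) := by
    intro τ hτF
    have hτG : τ ∈ G := by
      rw [hFG] at hτF
      exact Finset.mem_of_mem_erase hτF
    have hτfix := ((hmemG τ).mp hτG).2
    exact trace_extMap_fix b (τ : V →ₗ[ℂ] V) i₀
      (fun j hj => hτfix _ (hbH j hj)) hkk
  rw [Finset.sum_congr rfl htrace, Finset.sum_add_distrib, Finset.sum_const,
    ← Finset.sum_mul, hsumF, nsmul_eq_mul]
  ring


/-! ### Part 3: the k = 0 case and the main theorem -/

lemma exteriorPower_zero_eq : (⋀[ℂ]^0 V) = (1 : Submodule ℂ (ExteriorAlgebra ℂ V)) :=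
  pow_zero _

lemma trace_extMap_zero (f : V →ₗ[ℂ] V) :
    LinearMap.trace ℂ (⋀[ℂ]^0 V) (extMap 0 f) = 1 := by
  have hspan : (⋀[ℂ]^0 V) = Submodule.span ℂ {(1 : ExteriorAlgebra ℂ V)} := by
    rw [exteriorPower_zero_eq, Submodule.one_eq_span]
  have h0 : extMap 0 f = LinearMap.id := by
    apply LinearMap.ext
    rintro ⟨x, hx⟩
    have hx1 : x ∈ (1 : Submodule ℂ (ExteriorAlgebra ℂ V)) := by
      rw [← exteriorPower_zero_eq]; exact hx
    obtain ⟨r, hr⟩ := Submodule.mem_one.mp hx1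
    apply Subtype.ext
    show (ExteriorAlgebra.map f) x = x
    rw [← hr]
    exact AlgHom.commutes _ r
  haveI : Module.Finite ℂ (⋀[ℂ]^0 V) := by
    rw [hspan]
    infer_instance
  rw [h0, LinearMap.trace_id]
  have hrank : Module.finrank ℂ (⋀[ℂ]^0 V) = 1 := by
    rw [hspan]
    exact finrank_span_singleton one_ne_zero
  rw [hrank]
  norm_num

/-- For a nontrivial irreducible complex reflection group `W` of
rank `n` with Coxeter number `h`, the generalized Coxeter number of the character
of `⋀ᵏV` equals `hk`:  `|R|·C(n,k) − ∑_{τ∈R} Tr(⋀ᵏτ) = h·k·C(n,k)`. -/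
theorem coxeter_number_of_exterior_power
    [FiniteDimensional ℂ V] (n : ℕ) (hn : Module.finrank ℂ V = n)
    (W : Subgroup (V →ₗ[ℂ] V)ˣ)
    (hW : IsReflectionGroup W) (hnontrivial : W ≠ ⊥) (hirr : IsIrreducible W)
    (h : ℕ) (hh : h * n = (reflections W).ncard + (hyperplanes W).ncard)
    (k : ℕ) (hk : k ≤ n) :
    ((reflections W).ncard : ℂ) * (Nat.choose n k : ℂ)
        - (∑ᶠ τ ∈ reflections W,
            LinearMap.trace ℂ (⋀[ℂ]^k V) (extMap k (τ : (V →ₗ[ℂ] V)ˣ)))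
      = (h : ℂ) * (k : ℂ) * (Nat.choose n k : ℂ) := by
  classical
  have hRfin : (reflections W).Finite := hW.1.subset fun τ hτ => hτ.1
  rcases Nat.eq_zero_or_pos k with hk0 | hkpos
  · subst hk0
    have hconst : ∀ τ ∈ reflections W,
        LinearMap.trace ℂ (⋀[ℂ]^0 V) (extMap 0 (τ : V →ₗ[ℂ] V)) = (1 : ℂ) :=
      fun τ _ => trace_extMap_zero _
    rw [finsum_mem_congr rfl hconst]
    rw [← hRfin.coe_toFinset, finsum_mem_coe_finset, Finset.sum_const, nsmul_eq_mul,
      mul_one, Set.ncard_coe_finset]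
    simp
  · -- the case 1 ≤ k
    set RF := hRfin.toFinset with hRF
    set hypf : (V →ₗ[ℂ] V)ˣ → Submodule ℂ V :=
      fun τ => LinearMap.ker ((τ : V →ₗ[ℂ] V) - LinearMap.id) with hhypf
    set HF := RF.image hypf with hHF
    have hHcoe : hyperplanes W = ↑HF := by
      rw [hHF, Finset.coe_image, hRF, Set.Finite.coe_toFinset]
      rfl
    have hsum : ∑ᶠ τ ∈ reflections W,
        LinearMap.trace ℂ (⋀[ℂ]^k V) (extMap k (τ : V →ₗ[ℂ] V))
        = ∑ τ ∈ RF, LinearMap.trace ℂ (⋀[ℂ]^k V) (extMap k (τ : V →ₗ[ℂ] V)) := by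
      rw [← hRfin.coe_toFinset, finsum_mem_coe_finset]
    have hmaps : ∀ τ ∈ RF, hypf τ ∈ HF := fun τ hτ => Finset.mem_image_of_mem _ hτ
    have hfib : ∑ τ ∈ RF, LinearMap.trace ℂ (⋀[ℂ]^k V) (extMap k (τ : V →ₗ[ℂ] V))
        = ∑ H ∈ HF, ∑ τ ∈ RF.filter (fun τ => hypf τ = H),
            LinearMap.trace ℂ (⋀[ℂ]^k V) (extMap k (τ : V →ₗ[ℂ] V)) :=
      (Finset.sum_fiberwise_of_maps_to hmaps _).symm
    have hper : ∀ H ∈ HF, ∑ τ ∈ RF.filter (fun τ => hypf τ = H),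
        LinearMap.trace ℂ (⋀[ℂ]^k V) (extMap k (τ : V →ₗ[ℂ] V))
        = ((RF.filter (fun τ => hypf τ = H)).card : ℂ) * ((n-1).choose k : ℂ)
          - ((n-1).choose (k-1) : ℂ) := by
      intro H hH
      obtain ⟨τ₀, hτ₀RF, hτ₀H⟩ := Finset.mem_image.mp hH
      have hτ₀ : τ₀ ∈ reflections W := hRfin.mem_toFinset.mp hτ₀RF
      refine perH hn W hW.1 H τ₀ hτ₀.1 hτ₀.2 hτ₀H _ ?_ hkpos
      intro τ
      rw [Finset.mem_filter, hRfin.mem_toFinset]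
      exact Iff.rfl
    have hcard : ∑ H ∈ HF, ((RF.filter (fun τ => hypf τ = H)).card : ℂ) = (RF.card : ℂ) := by
      rw [← Nat.cast_sum]
      exact_mod_cast congrArg (Nat.cast (R := ℂ))
        (Finset.card_eq_sum_card_fiberwise hmaps).symm
    have htot : ∑ τ ∈ RF, LinearMap.trace ℂ (⋀[ℂ]^k V) (extMap k (τ : V →ₗ[ℂ] V))
        = (RF.card : ℂ) * ((n-1).choose k : ℂ) - (HF.card : ℂ) * ((n-1).choose (k-1) : ℂ) := by
      rw [hfib, Finset.sum_congr rfl hper, Finset.sum_sub_distrib, ← Finset.sum_mul, hcard,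
        Finset.sum_const, nsmul_eq_mul]
    have hRcard : ((reflections W).ncard : ℂ) = (RF.card : ℂ) := by
      rw [← hRfin.coe_toFinset, Set.ncard_coe_finset]
    have hHcard : ((hyperplanes W).ncard : ℂ) = (HF.card : ℂ) := by
      rw [hHcoe, Set.ncard_coe_finset]
    rw [hsum, htot, hRcard]
    -- now pure arithmetic
    obtain ⟨j, rfl⟩ : ∃ j, k = j + 1 := ⟨k - 1, by omega⟩
    obtain ⟨m, rfl⟩ : ∃ m, n = m + 1 := ⟨n - 1, by omega⟩
    have hhC : (h : ℂ) * (m + 1 : ℕ)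
        = ((reflections W).ncard : ℂ) + ((hyperplanes W).ncard : ℂ) := by
      exact_mod_cast congrArg (Nat.cast (R := ℂ)) hh
    rw [hRcard, hHcard] at hhC
    have e1 : ((m+1).choose (j+1) : ℂ) = (m.choose j : ℂ) + (m.choose (j+1) : ℂ) := by
      exact_mod_cast congrArg (Nat.cast (R := ℂ)) (Nat.choose_succ_succ (n := m) (k := j))
    have e2 : ((m+1 : ℕ) : ℂ) * (m.choose j : ℂ) = ((m+1).choose (j+1) : ℂ) * ((j+1 : ℕ) : ℂ) := by
      exact_mod_cast congrArg (Nat.cast (R := ℂ)) (Nat.add_one_mul_choose_eq m j)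
    have hsimp1 : (m + 1 - 1 : ℕ) = m := by omega
    have hsimp2 : (j + 1 - 1 : ℕ) = j := by omega
    rw [hsimp1, hsimp2]
    push_cast at hhC e1 e2 ⊢
    linear_combination ((RF.card : ℂ)) * e1 + (h : ℂ) * e2 - (m.choose j : ℂ) * hhC

end CD
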